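/- Let A be a Hopf algebra over a commutative ring R with antipode S, and let x ∈ A be a grouplike element. Then A admits a normalized two-sided integral if and only if A admits a normalized two-sided x-semi-invariant integral. Explicitly, if w is a normalized two-sided integral then the functional a ↦ w(S(x)·a) is a normalized two-sided x-semi-invariant integral, and conversely if w_χ is a normalized two-sided x-semi-invariant integral then a ↦ w_χ(x·a) is a normalized two-sided integral. -/

import Mathlib

open TensorProduct

/-- The convolution product on the dual `A* = Hom_R(A, R)` of a bialgebra `A`:
`(f * g)(a) = Σ f(a₍₁₎) · g(a₍₂₎)`. -/
noncomputable def conv {R A : Type*} [CommRing R] [Ring A] [Bialgebra R A]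
    (f g : Module.Dual R A) : Module.Dual R A :=
  LinearMap.mul' R R ∘ₗ TensorProduct.map f g ∘ₗ Coalgebra.comul

/-- An element `x` of a bialgebra is grouplike if `Δ x = x ⊗ x` and `ε x = 1`. -/
def IsGroupLikeElem' (R : Type*) {A : Type*} [CommRing R] [Ring A] [Bialgebra R A]
    (x : A) : Prop :=
  Coalgebra.comul (R := R) x = x ⊗ₜ[R] x ∧ Coalgebra.counit (R := R) x = 1

/-- For `x` grouplike, a normalized two-sided `x`-semi-invariant integral on `A` is
`w ∈ A*` with `f * w = w * f = f(x) • w` for all `f ∈ A*` and `w(x) = 1`. -/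
def IsNormalizedSemiInvIntegral {R A : Type*} [CommRing R] [Ring A] [Bialgebra R A]
    (x : A) (w : Module.Dual R A) : Prop :=
  (∀ f : Module.Dual R A, conv f w = f x • w) ∧
  (∀ f : Module.Dual R A, conv w f = f x • w) ∧
  w x = 1

/-- A normalized two-sided integral on a bialgebra `A`. -/
def IsNormalizedIntegral {R A : Type*} [CommRing R] [Ring A] [Bialgebra R A]
    (w : Module.Dual R A) : Prop :=
  (∀ f : Module.Dual R A, conv f w = f 1 • w) ∧
  (∀ f : Module.Dual R A, conv w f = f 1 • w) ∧
  w 1 = 1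

/-- Translation by a grouplike element commutes with convolution. -/
lemma conv_comp_mulLeft {R A : Type*} [CommRing R] [Ring A] [Bialgebra R A]
    (g : A) (hg : Coalgebra.comul (R := R) g = g ⊗ₜ[R] g) (f h : Module.Dual R A) :
    conv (f ∘ₗ LinearMap.mulLeft R g) (h ∘ₗ LinearMap.mulLeft R g) =
      (conv f h) ∘ₗ LinearMap.mulLeft R g := by
  ext a
  simp only [conv, LinearMap.comp_apply, LinearMap.mulLeft_apply]
  rw [Bialgebra.comul_mul, hg]
  induction (Coalgebra.comul (R := R) a) using TensorProduct.induction_on with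
  | zero => simp
  | tmul b c => simp [Algebra.TensorProduct.tmul_mul_tmul]
  | add u v hu hv =>
      simp only [mul_add, map_add, hu, hv]

theorem integral_iff_semiinvariant_integral {R A : Type*} [CommRing R] [Ring A]
    [HopfAlgebra R A] (x : A) (hx : IsGroupLikeElem' R x) :
    ((∃ w : Module.Dual R A, IsNormalizedIntegral w) ↔
      (∃ wχ : Module.Dual R A, IsNormalizedSemiInvIntegral x wχ)) ∧
    (∀ w : Module.Dual R A, IsNormalizedIntegral w →
      IsNormalizedSemiInvIntegral x
        (w ∘ₗ LinearMap.mulLeft R (HopfAlgebra.antipode (R := R) x))) ∧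
    (∀ wχ : Module.Dual R A, IsNormalizedSemiInvIntegral x wχ →
      IsNormalizedIntegral (wχ ∘ₗ LinearMap.mulLeft R x)) := by
  set S : A := HopfAlgebra.antipode (R := R) x with hS
  have hSx : S * x = 1 := by
    have := HopfAlgebra.mul_antipode_rTensor_comul_apply (R := R) (a := x)
    rw [hx.1] at this
    simpa [hx.2] using this
  have hxS : x * S = 1 := by
    have := HopfAlgebra.mul_antipode_lTensor_comul_apply (R := R) (a := x)
    rw [hx.1] at this
    simpa [hx.2] using this
  -- composition facts
  have hLSx : LinearMap.mulLeft R S ∘ₗ LinearMap.mulLeft R x = LinearMap.id := by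
    rw [← LinearMap.mulLeft_mul, hSx, LinearMap.mulLeft_one]
  have hLxS : LinearMap.mulLeft R x ∘ₗ LinearMap.mulLeft R S = LinearMap.id := by
    rw [← LinearMap.mulLeft_mul, hxS, LinearMap.mulLeft_one]
  have key := conv_comp_mulLeft (R := R) (A := A) x hx.1
  -- direction 1
  have dir1 : ∀ w : Module.Dual R A, IsNormalizedIntegral w →
      IsNormalizedSemiInvIntegral x (w ∘ₗ LinearMap.mulLeft R S) := by
    intro w hw
    set w' : Module.Dual R A := w ∘ₗ LinearMap.mulLeft R S with hw'
    have hw'x : w' ∘ₗ LinearMap.mulLeft R x = w := by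
      rw [hw', LinearMap.comp_assoc, hLSx, LinearMap.comp_id]
    refine ⟨?_, ?_, ?_⟩
    · intro f
      have h1 : conv f w' ∘ₗ LinearMap.mulLeft R x = f x • w := by
        rw [← key f w', hw'x, hw.1 (f ∘ₗ LinearMap.mulLeft R x)]
        simp [mul_one]
      calc conv f w' = (conv f w' ∘ₗ LinearMap.mulLeft R x) ∘ₗ LinearMap.mulLeft R S := by
            rw [LinearMap.comp_assoc, hLxS, LinearMap.comp_id]
        _ = f x • w' := by rw [h1, LinearMap.smul_comp, hw']
    · intro f
      have h1 : conv w' f ∘ₗ LinearMap.mulLeft R x = f x • w := by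
        rw [← key w' f, hw'x, hw.2.1 (f ∘ₗ LinearMap.mulLeft R x)]
        simp [mul_one]
      calc conv w' f = (conv w' f ∘ₗ LinearMap.mulLeft R x) ∘ₗ LinearMap.mulLeft R S := by
            rw [LinearMap.comp_assoc, hLxS, LinearMap.comp_id]
        _ = f x • w' := by rw [h1, LinearMap.smul_comp, hw']
    · simp only [hw', LinearMap.comp_apply, LinearMap.mulLeft_apply, hSx]
      exact hw.2.2
  -- direction 2
  have dir2 : ∀ wχ : Module.Dual R A, IsNormalizedSemiInvIntegral x wχ →
      IsNormalizedIntegral (wχ ∘ₗ LinearMap.mulLeft R x) := by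
    intro wχ hwχ
    refine ⟨?_, ?_, ?_⟩
    · intro f
      have hf : (f ∘ₗ LinearMap.mulLeft R S) ∘ₗ LinearMap.mulLeft R x = f := by
        rw [LinearMap.comp_assoc, hLSx, LinearMap.comp_id]
      calc conv f (wχ ∘ₗ LinearMap.mulLeft R x)
          = conv ((f ∘ₗ LinearMap.mulLeft R S) ∘ₗ LinearMap.mulLeft R x)
              (wχ ∘ₗ LinearMap.mulLeft R x) := by rw [hf]
        _ = conv (f ∘ₗ LinearMap.mulLeft R S) wχ ∘ₗ LinearMap.mulLeft R x := key _ _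
        _ = f 1 • (wχ ∘ₗ LinearMap.mulLeft R x) := by
            rw [hwχ.1 (f ∘ₗ LinearMap.mulLeft R S), LinearMap.smul_comp]
            simp [hSx]
    · intro f
      have hf : (f ∘ₗ LinearMap.mulLeft R S) ∘ₗ LinearMap.mulLeft R x = f := by
        rw [LinearMap.comp_assoc, hLSx, LinearMap.comp_id]
      calc conv (wχ ∘ₗ LinearMap.mulLeft R x) f
          = conv (wχ ∘ₗ LinearMap.mulLeft R x)
              ((f ∘ₗ LinearMap.mulLeft R S) ∘ₗ LinearMap.mulLeft R x) := by rw [hf]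
        _ = conv wχ (f ∘ₗ LinearMap.mulLeft R S) ∘ₗ LinearMap.mulLeft R x := key _ _
        _ = f 1 • (wχ ∘ₗ LinearMap.mulLeft R x) := by
            rw [hwχ.2.1 (f ∘ₗ LinearMap.mulLeft R S), LinearMap.smul_comp]
            simp [hSx]
    · simp only [LinearMap.comp_apply, LinearMap.mulLeft_apply, mul_one]
      exact hwχ.2.2
  exact ⟨⟨fun ⟨w, hw⟩ => ⟨_, dir1 w hw⟩, fun ⟨wχ, hwχ⟩ => ⟨_, dir2 wχ hwχ⟩⟩, dir1, dir2⟩
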